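/- arXiv:1909.06105 — 3 statements merged into one kernel-verified Lean document; each statement's English description precedes it below -/
import Mathlib

section
/- Let P be a finite point set in general position in the plane, p ∈ B(P) a hull vertex, and suppose P \ {p} has a convex decomposition Π. Let 𝒫 ∈ Π be the element containing the hull edge p⁻ p⁺ of P \ {p} (where p⁻, p⁺ are the hull neighbors of p in P) on its boundary, and assume the open triangle p⁻ p p⁺ contains no point of P. Then (Π \ {𝒫}) ∪ {conv(𝒫 ∪ {p})} is a convex decomposition of P of the same cardinality as Π. -/
/-- Points of the plane. -/
abbrev Pt := ℝ × ℝ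

/-- A finite point set is in general position if no three of its points are collinear. -/
def GenPos (P : Finset Pt) : Prop :=
  ∀ p ∈ P, ∀ q ∈ P, ∀ r ∈ P, p ≠ q → q ≠ r → p ≠ r → ¬ Collinear ℝ ({p, q, r} : Set Pt)

open Classical in
/-- The vertices of the convex hull of `P`. -/
noncomputable def hullB (P : Finset Pt) : Finset Pt :=
  P.filter (fun p => p ∉ convexHull ℝ ((P : Set Pt) \ {p}))

open Classical in
/-- The interior points of `P` (the points that are not hull vertices). -/
noncomputable def intI (P : Finset Pt) : Finset Pt := P \ hullB P

/-- A closed convex polygon with vertices in `P`. -/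
def IsPolygonOn (P : Finset Pt) (C : Set Pt) : Prop :=
  ∃ V : Finset Pt, V ⊆ P ∧ 3 ≤ V.card ∧ C = convexHull ℝ (V : Set Pt)

/-- A convex decomposition of a region `R` with respect to `P`: closed convex polygons
with vertices in `P`, pairwise disjoint interiors, union `R`, and no point of `P`
in the interior of any polygon. -/
def IsConvexDecompOfRegion (P : Finset Pt) (R : Set Pt) (D : Finset (Set Pt)) : Prop :=
  (∀ C ∈ D, IsPolygonOn P C) ∧
  (∀ C ∈ D, ∀ C' ∈ D, C ≠ C' → interior C ∩ interior C' = ∅) ∧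
  (⋃ C ∈ D, C) = R ∧
  (∀ C ∈ D, ∀ p ∈ P, (p : Pt) ∉ interior C)

/-- A convex decomposition of the point set `P`. -/
def IsConvexDecomp (P : Finset Pt) (D : Finset (Set Pt)) : Prop :=
  IsConvexDecompOfRegion P (convexHull ℝ (P : Set Pt)) D

/-- `uMin P` is the minimum number of polygons in a convex decomposition of `P`. -/
noncomputable def uMin (P : Finset Pt) : ℕ :=
  sInf {n | ∃ D : Finset (Set Pt), IsConvexDecomp P D ∧ D.card = n}

/-- `p` and `q` are the endpoints of an edge of the convex hull of `P`. -/
def IsHullEdge (P : Finset Pt) (p q : Pt) : Prop :=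
  p ∈ hullB P ∧ q ∈ hullB P ∧ p ≠ q ∧
    segment ℝ p q ⊆ frontier (convexHull ℝ (P : Set Pt))

/-- `H` is the open half-plane with `q` and `q'` on its boundary containing
no point of `I` (the outer half-plane of the edge `q q'` of `CH(I)`). -/
def IsOuterHalf (I : Finset Pt) (q q' : Pt) (H : Set Pt) : Prop :=
  ∃ f : Pt →ₗ[ℝ] ℝ, f ≠ 0 ∧ f q = f q' ∧ H = {x | f q < f x} ∧ ∀ r ∈ I, f r ≤ f q

/-- The angular domain at `a` bounded by the rays from `a` through `b` and through `c`,
containing the segment `b c`. -/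
def angDom (a b c : Pt) : Set Pt :=
  {x | ∃ s t : ℝ, 0 ≤ s ∧ 0 ≤ t ∧ x = a + s • (b - a) + t • (c - a)}

/-- Every triangle of three consecutive hull vertices of `P` contains a point of `P`
in its interior. -/
def TripleFilled (P : Finset Pt) : Prop :=
  ∀ a p c : Pt, IsHullEdge P a p → IsHullEdge P p c → a ≠ c →
    (interior (convexHull ℝ ({a, p, c} : Set Pt)) ∩ (P : Set Pt)).Nonempty

/-- Every outer open half-plane of a hull edge of `I(P)` contains exactly one
hull vertex of `P`. -/
def OuterOne (P : Finset Pt) : Prop :=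
  ∀ q q' H, IsHullEdge (intI P) q q' → IsOuterHalf (intI P) q q' H →
    ((hullB P : Set Pt) ∩ H).ncard = 1
-- ===== auxiliary lemmas =====
lemma pt_eq_iff (x y : Pt) : x = y ↔ x.1 = y.1 ∧ x.2 = y.2 := Prod.ext_iff

lemma collinear_of_det_eq (a b c : Pt)
    (h : (b.1-a.1)*(c.2-a.2) - (b.2-a.2)*(c.1-a.1) = 0) :
    Collinear ℝ ({a,b,c} : Set Pt) := by
  rcases eq_or_ne b a with hba | hba
  · have hs : ({a,b,c} : Set Pt) = {a, c} := by
      ext x; simp [hba]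
    rw [hs]; exact collinear_pair ℝ a c
  · rw [collinear_iff_of_mem (Set.mem_insert a ({b,c} : Set Pt))]
    refine ⟨b - a, ?_⟩
    intro p hp
    have hsmul : ∀ t : ℝ, t • (b - a) +ᵥ a = (t*(b.1-a.1)+a.1, t*(b.2-a.2)+a.2) := by
      intro t
      rw [pt_eq_iff]
      constructor <;> simp [smul_eq_mul]
    rcases hp with rfl | rfl | rfl
    · exact ⟨0, by rw [hsmul]; rw [pt_eq_iff]; constructor <;> simp⟩
    · exact ⟨1, by rw [hsmul]; rw [pt_eq_iff]; constructor <;> simp⟩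
    · rcases eq_or_ne (b.1 - a.1) 0 with h1 | h1
      · have h2 : b.2 - a.2 ≠ 0 := by
          intro h2
          apply hba
          rw [pt_eq_iff]
          constructor <;> linarith
        refine ⟨(p.2 - a.2)/(b.2 - a.2), ?_⟩
        rw [hsmul, pt_eq_iff]
        constructor <;> simp only []
        · have h0 : (b.1 - a.1) * (p.2 - a.2) = 0 := by rw [h1]; ring
          have : (b.2 - a.2) * (p.1 - a.1) = 0 := by linarith
          have h3 : p.1 - a.1 = 0 := by
            rcases mul_eq_zero.1 this with h' | h'
            · exact absurd h' h2
            · exact h'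
          rw [h1]; ring_nf; linarith
        · field_simp; ring
      · refine ⟨(p.1 - a.1)/(b.1 - a.1), ?_⟩
        rw [hsmul, pt_eq_iff]
        constructor <;> simp only []
        · field_simp; ring
        · field_simp
          nlinarith [h]

lemma lin_apply (f : Pt →L[ℝ] ℝ) (v : Pt) : f v = v.1 * f (1,0) + v.2 * f (0,1) := by
  have hv : v = v.1 • ((1,0) : Pt) + v.2 • ((0,1) : Pt) := by
    rw [pt_eq_iff]; constructor <;> simp
  calc f v = f (v.1 • ((1,0):Pt) + v.2 • ((0,1):Pt)) := by rw [← hv]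
  _ = v.1 * f (1,0) + v.2 * f (0,1) := by
      rw [map_add, map_smul, map_smul]; simp [smul_eq_mul]

lemma collinear_of_line (f : Pt →L[ℝ] ℝ) (hf : f ≠ 0) (a b c : Pt)
    (hb : f b = f a) (hc : f c = f a) : Collinear ℝ ({a,b,c} : Set Pt) := by
  set c1 := f (1,0) with hc1
  set c2 := f (0,1) with hc2
  have hab : (b.1-a.1) * c1 + (b.2-a.2) * c2 = 0 := by
    nlinarith [lin_apply f b, lin_apply f a]
  have hac : (c.1-a.1) * c1 + (c.2-a.2) * c2 = 0 := by
    nlinarith [lin_apply f c, lin_apply f a]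
  have hne : c1 ≠ 0 ∨ c2 ≠ 0 := by
    by_contra hcontra
    push_neg at hcontra
    apply hf
    refine ContinuousLinearMap.ext fun v => ?_
    rw [lin_apply f v, ← hc1, ← hc2, hcontra.1, hcontra.2]
    simp
  apply collinear_of_det_eq
  rcases hne with h | h
  · have : c1 * ((b.1-a.1)*(c.2-a.2) - (b.2-a.2)*(c.1-a.1)) = 0 := by
      linear_combination (c.2-a.2) * hab - (b.2-a.2) * hac
    rcases mul_eq_zero.1 this with h' | h'
    · exact absurd h' h
    · exact h'
  · have : c2 * ((b.1-a.1)*(c.2-a.2) - (b.2-a.2)*(c.1-a.1)) = 0 := by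
      linear_combination (b.1-a.1) * hac - (c.1-a.1) * hab
    rcases mul_eq_zero.1 this with h' | h'
    · exact absurd h' h
    · exact h'

lemma exists_bary {a b c : Pt} (h : ¬ Collinear ℝ ({a,b,c} : Set Pt)) (x : Pt) :
    ∃ u v w : ℝ, u + v + w = 1 ∧ x = u • a + v • b + w • c := by
  set d := (b.1-a.1)*(c.2-a.2) - (b.2-a.2)*(c.1-a.1) with hd
  have hdne : d ≠ 0 := fun h0 => h (collinear_of_det_eq a b c h0)
  set v := ((x.1-a.1)*(c.2-a.2) - (x.2-a.2)*(c.1-a.1))/d with hv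
  set w := ((b.1-a.1)*(x.2-a.2) - (b.2-a.2)*(x.1-a.1))/d with hw
  refine ⟨1 - v - w, v, w, by ring, ?_⟩
  rw [pt_eq_iff]
  constructor
  · show x.1 = (1-v-w) * a.1 + v * b.1 + w * c.1
    rw [hv, hw]; field_simp; ring
  · show x.2 = (1-v-w) * a.2 + v * b.2 + w * c.2
    rw [hv, hw]; field_simp; ring

lemma combo_mem_triangle {a b c x : Pt} {u v w : ℝ} (hu : 0 ≤ u) (hv : 0 ≤ v) (hw : 0 ≤ w)
    (hs : u + v + w = 1) (hx : x = u • a + v • b + w • c) :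
    x ∈ convexHull ℝ ({a,b,c} : Set Pt) := by
  have ha : a ∈ convexHull ℝ ({a,b,c} : Set Pt) := subset_convexHull ℝ _ (by simp)
  have hb : b ∈ convexHull ℝ ({a,b,c} : Set Pt) := subset_convexHull ℝ _ (by simp)
  have hc : c ∈ convexHull ℝ ({a,b,c} : Set Pt) := subset_convexHull ℝ _ (by simp)
  have hconv := convex_convexHull ℝ ({a,b,c} : Set Pt)
  rcases eq_or_lt_of_le (add_nonneg hu hv) with h0 | h0
  · have hu0 : u = 0 := by linarith
    have hv0 : v = 0 := by linarith
    have hw1 : w = 1 := by linarith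
    rw [hx, hu0, hv0, hw1]; simpa using hc
  · have hy : (u/(u+v)) • a + (v/(u+v)) • b ∈ convexHull ℝ ({a,b,c} : Set Pt) := by
      apply hconv ha hb (by positivity) (by positivity)
      field_simp
    have hxx : x = (u+v) • ((u/(u+v)) • a + (v/(u+v)) • b) + w • c := by
      rw [hx, smul_add, smul_smul, smul_smul]
      rw [mul_div_cancel₀ _ (ne_of_gt h0), mul_div_cancel₀ _ (ne_of_gt h0)]
    rw [hxx]
    exact hconv hy hc (le_of_lt h0) hw (by linarith)

lemma cross_seg {p z : Pt} (f : Pt →L[ℝ] ℝ) {α : ℝ} (hp : α < f p) (hz : f z ≤ α)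
    {x : Pt} (hx : x ∈ segment ℝ p z) (hxf : f x ≤ α) :
    ∃ y ∈ segment ℝ p z, f y = α ∧ x ∈ segment ℝ y z := by
  obtain ⟨s, b, hs, hb, hsb, rfl⟩ := hx
  set t := (α - f z)/(f p - f z) with ht
  have hpz : 0 < f p - f z := by linarith
  have ht0 : 0 ≤ t := by
    apply div_nonneg (by linarith) (by linarith)
  have ht1 : t ≤ 1 := by
    rw [ht]
    apply div_le_one_of_le₀ (by linarith) (by linarith)
  have hfx : s * f p + b * f z ≤ α := by
    have : f (s • p + b • z) = s * f p + b * f z := by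
      rw [map_add, map_smul, map_smul]; simp [smul_eq_mul]
    linarith [hxf, this.symm.le]
  have hst : s ≤ t := by
    rw [ht, le_div_iff₀ hpz]
    have hb' : b = 1 - s := by linarith
    rw [hb'] at hfx
    nlinarith
  refine ⟨t • p + (1-t) • z, ⟨t, 1-t, ht0, by linarith, by ring, rfl⟩, ?_, ?_⟩
  · rw [map_add, map_smul, map_smul]
    simp only [smul_eq_mul]
    rw [ht]
    field_simp
    ring
  · rcases eq_or_lt_of_le ht0 with h0 | h0
    · have hs0 : s = 0 := by linarith
      have hb1 : b = 1 := by linarith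
      rw [hs0, hb1]
      simpa using right_mem_segment ℝ _ z
    · refine ⟨s/t, 1 - s/t, by positivity, ?_, by ring, ?_⟩
      · have : s/t ≤ 1 := by rw [div_le_one h0]; exact hst
        linarith
      · rw [smul_add, smul_smul, smul_smul]
        have e1 : s/t*t = s := div_mul_cancel₀ _ (ne_of_gt h0)
        rw [e1]
        have hb' : b = 1 - s := by linarith
        rw [pt_eq_iff]
        constructor
        · show s*p.1 + (s/t*(1-t))*z.1 + (1-s/t)*z.1 = s*p.1 + b*z.1
          rw [hb']
          field_simp
          ring
        · show s*p.2 + (s/t*(1-t))*z.2 + (1-s/t)*z.2 = s*p.2 + b*z.2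
          rw [hb']
          field_simp
          ring

lemma interior_subset_lt (f : Pt →L[ℝ] ℝ) (hf : f ≠ 0) {α : ℝ} {S : Set Pt}
    (hS : ∀ y ∈ S, f y ≤ α) {x : Pt} (hx : x ∈ interior S) : f x < α := by
  have hle : f x ≤ α := hS x (interior_subset hx)
  rcases eq_or_lt_of_le hle with heq | h
  · exfalso
    obtain ⟨v0, hv0⟩ : ∃ v, f v ≠ 0 := by
      by_contra hc; push_neg at hc
      exact hf (ContinuousLinearMap.ext fun v => by simp [hc v])
    set v := if 0 < f v0 then v0 else -v0 with hv
    have hfv : 0 < f v := by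
      rw [hv]; split_ifs with h'
      · exact h'
      · rw [map_neg]; push_neg at h'
        rcases lt_or_eq_of_le h' with h'' | h''
        · linarith
        · exact absurd h'' hv0
    have hvne : v ≠ 0 := fun h0 => by rw [h0, map_zero] at hfv; linarith
    obtain ⟨ε, hε, hball⟩ := Metric.mem_nhds_iff.1 (mem_interior_iff_mem_nhds.1 hx)
    set δ := ε/(2*(‖v‖+1)) with hδ
    have hδ0 : 0 < δ := by positivity
    have hmem : x + δ • v ∈ Metric.ball x ε := by
      rw [Metric.mem_ball, dist_eq_norm]
      have : x + δ • v - x = δ • v := by abel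
      rw [this, norm_smul]
      simp only [Real.norm_eq_abs, abs_of_pos hδ0]
      rw [hδ]
      have hn : 0 ≤ ‖v‖ := norm_nonneg v
      rw [div_mul_eq_mul_div, div_lt_iff₀ (by positivity)]
      nlinarith
    have := hS _ (hball hmem)
    rw [map_add, map_smul] at this
    simp only [smul_eq_mul] at this
    nlinarith
  · exact h

lemma open_inter_interior {C : Set Pt} (hC : Convex ℝ C) {z : Pt} (hz : z ∈ interior C)
    {U : Set Pt} (hU : IsOpen U) {x : Pt} (hxC : x ∈ C) (hxU : x ∈ U) :
    (interior C ∩ U).Nonempty := by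
  obtain ⟨ε, hε, hball⟩ := Metric.mem_nhds_iff.1 (hU.mem_nhds hxU)
  set t := min 1 (ε/(2*(‖z - x‖+1))) with htdef
  have ht0 : 0 < t := by positivity
  have ht1 : t ≤ 1 := min_le_left _ _
  refine ⟨t • z + (1-t) • x, ?_, ?_⟩
  · exact hC.combo_interior_closure_mem_interior hz (subset_closure hxC) ht0 (by linarith) (by ring)
  · apply hball
    rw [Metric.mem_ball, dist_eq_norm]
    have he : t • z + (1-t) • x - x = t • (z - x) := by
      rw [smul_sub, sub_smul, one_smul]; abel
    rw [he, norm_smul]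
    simp only [Real.norm_eq_abs, abs_of_pos ht0]
    have h2 : t ≤ ε/(2*(‖z-x‖+1)) := min_le_right _ _
    have hn : (0:ℝ) ≤ ‖z - x‖ := norm_nonneg _
    calc t * ‖z-x‖ ≤ ε/(2*(‖z-x‖+1)) * ‖z-x‖ := by nlinarith
    _ < ε := by
        rw [div_mul_eq_mul_div, div_lt_iff₀ (by positivity)]
        nlinarith

lemma interior_hull_nonempty {s : Set Pt} {a b c : Pt} (ha : a ∈ s) (hb : b ∈ s) (hc : c ∈ s)
    (h : ¬Collinear ℝ ({a,b,c} : Set Pt)) : (interior (convexHull ℝ s)).Nonempty := by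
  rw [(convex_convexHull ℝ s).interior_nonempty_iff_affineSpan_eq_top, affineSpan_convexHull]
  have hai : AffineIndependent ℝ ![a,b,c] := by
    rw [affineIndependent_iff_not_collinear_set]
    exact h
  have htop : affineSpan ℝ (Set.range ![a,b,c]) = ⊤ := by
    rw [hai.affineSpan_eq_top_iff_card_eq_finrank_add_one]
    simp [Module.finrank_prod]
  have hsub : Set.range ![a,b,c] ⊆ s := by
    intro x hx
    simp only [Matrix.range_cons, Matrix.range_empty, Set.singleton_union,
      LawfulSingleton.insert_empty_eq] at hx
    rcases hx with rfl | rfl | rfl <;> assumption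
  have := affineSpan_mono ℝ hsub
  rw [htop] at this
  exact top_le_iff.1 this

lemma support_of_frontier_seg (Q : Set Pt) (hQfin : Q.Finite)
    (hint : (interior (convexHull ℝ Q)).Nonempty) {a b : Pt}
    (hseg : segment ℝ a b ⊆ frontier (convexHull ℝ Q)) :
    ∃ f : Pt →L[ℝ] ℝ, f ≠ 0 ∧ f b = f a ∧ ∀ x ∈ convexHull ℝ Q, f x ≤ f a := by
  set m : Pt := (1/2 : ℝ) • a + (1/2 : ℝ) • b with hm
  have hmseg : m ∈ segment ℝ a b := ⟨1/2, 1/2, by norm_num, by norm_num, by norm_num, rfl⟩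
  have hmfr := hseg hmseg
  have hmni : m ∉ interior (convexHull ℝ Q) := fun h => hmfr.2 h
  obtain ⟨f, hflt⟩ := geometric_hahn_banach_open_point
    ((convex_convexHull ℝ Q).interior) isOpen_interior hmni
  obtain ⟨z, hz⟩ := hint
  have hfz : f z < f m := hflt z hz
  have hfne : f ≠ 0 := by
    intro h0; rw [h0] at hfz; simp at hfz
  have hle : ∀ x ∈ convexHull ℝ Q, f x ≤ f m := by
    intro x hx
    by_contra hgt
    push_neg at hgt
    set t := (f x - f m)/(f x - f z) with htd
    have h1 : f z < f m := hfz
    have ht0 : 0 < t := by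
      apply div_pos (by linarith) (by linarith)
    have ht1 : t < 1 := by
      rw [htd, div_lt_one (by linarith)]; linarith
    have hmem : t • z + (1-t) • x ∈ interior (convexHull ℝ Q) :=
      (convex_convexHull ℝ Q).combo_interior_closure_mem_interior hz (subset_closure hx)
        ht0 (by linarith) (by ring)
    have := hflt _ hmem
    rw [map_add, map_smul, map_smul] at this
    simp only [smul_eq_mul] at this
    have h2 : t * (f x - f z) = f x - f m := by
      rw [htd]; exact div_mul_cancel₀ _ (by linarith)
    have hc : t * f z + (1-t) * f x = f m := by linear_combination (-1) * h2
    linarith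
  have hcl : IsClosed (convexHull ℝ Q) := (hQfin.isCompact_convexHull ℝ).isClosed
  have haQ : a ∈ convexHull ℝ Q := by
    have := frontier_subset_closure (hseg (left_mem_segment ℝ a b))
    rwa [hcl.closure_eq] at this
  have hbQ : b ∈ convexHull ℝ Q := by
    have := frontier_subset_closure (hseg (right_mem_segment ℝ a b))
    rwa [hcl.closure_eq] at this
  have hfm : f m = 1/2 * f a + 1/2 * f b := by
    rw [hm, map_add, map_smul, map_smul]; simp [smul_eq_mul]
  have hfa : f a ≤ f m := hle a haQ
  have hfb : f b ≤ f m := hle b hbQ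
  have hab : f a = f m := by linarith
  refine ⟨f, hfne, by linarith, fun x hx => ?_⟩
  rw [hab]
  exact hle x hx

noncomputable def detP (a b c : Pt) : ℝ := (b.1-a.1)*(c.2-a.2) - (b.2-a.2)*(c.1-a.1)
noncomputable def bV (a b c y : Pt) : ℝ :=
  ((y.1-a.1)*(c.2-a.2) - (y.2-a.2)*(c.1-a.1)) * (detP a b c)⁻¹
noncomputable def bW (a b c y : Pt) : ℝ :=
  ((b.1-a.1)*(y.2-a.2) - (b.2-a.2)*(y.1-a.1)) * (detP a b c)⁻¹
noncomputable def bU (a b c y : Pt) : ℝ := 1 - bV a b c y - bW a b c y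

lemma bary_sum (a b c y : Pt) : bU a b c y + bV a b c y + bW a b c y = 1 := by
  unfold bU; ring

lemma bary_combo {a b c : Pt} (hd : detP a b c ≠ 0) (y : Pt) :
    y = bU a b c y • a + bV a b c y • b + bW a b c y • c := by
  unfold bU bV bW detP at *
  rw [pt_eq_iff]
  constructor
  · show y.1 = _ * a.1 + _ * b.1 + _ * c.1
    have hinv := mul_inv_cancel₀ hd
    linear_combination (-(y.1-a.1)) * hinv
  · show y.2 = _ * a.2 + _ * b.2 + _ * c.2
    have hinv := mul_inv_cancel₀ hd
    linear_combination (-(y.2-a.2)) * hinv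

lemma bary_unique {a b c : Pt} (hd : detP a b c ≠ 0) {x : Pt} {u v w : ℝ}
    (hsum : u + v + w = 1) (hx : x = u • a + v • b + w • c) :
    u = bU a b c x ∧ v = bV a b c x ∧ w = bW a b c x := by
  have e1 : x.1 = u * a.1 + v * b.1 + w * c.1 := by rw [hx]; rfl
  have e2 : x.2 = u * a.2 + v * b.2 + w * c.2 := by rw [hx]; rfl
  have hu : u = 1 - v - w := by linarith
  rw [hu] at e1 e2
  have hv : v = bV a b c x := by
    unfold bV detP at *
    have hinv := mul_inv_cancel₀ hd
    linear_combination (-v) * hinv + (c.1-a.1) * ((b.1-a.1)*(c.2-a.2) - (b.2-a.2)*(c.1-a.1))⁻¹ * e2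
      - (c.2-a.2) * ((b.1-a.1)*(c.2-a.2) - (b.2-a.2)*(c.1-a.1))⁻¹ * e1
  have hw : w = bW a b c x := by
    unfold bW detP at *
    field_simp
    linear_combination (b.2-a.2)*e1 - (b.1-a.1)*e2
  refine ⟨?_, hv, hw⟩
  unfold bU
  rw [← hv, ← hw]
  linarith

lemma mem_interior_triangle {a b c : Pt} (h : ¬Collinear ℝ ({a,b,c} : Set Pt)) {x : Pt}
    {u v w : ℝ} (hsum : u + v + w = 1) (hx : x = u • a + v • b + w • c)
    (hu : 0 < u) (hv : 0 < v) (hw : 0 < w) :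
    x ∈ interior (convexHull ℝ ({a,b,c} : Set Pt)) := by
  have hd : detP a b c ≠ 0 := fun h0 => h (collinear_of_det_eq a b c h0)
  obtain ⟨hu', hv', hw'⟩ := bary_unique hd hsum hx
  have c1 : Continuous (bV a b c) := by unfold bV; fun_prop
  have c2 : Continuous (bW a b c) := by unfold bW; fun_prop
  have c3 : Continuous (bU a b c) := by unfold bU; fun_prop
  set U : Set Pt := {y | 0 < bU a b c y ∧ 0 < bV a b c y ∧ 0 < bW a b c y} with hU
  have hUopen : IsOpen U := by
    have : U = {y | 0 < bU a b c y} ∩ ({y | 0 < bV a b c y} ∩ {y | 0 < bW a b c y}) := by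
      ext y; simp [hU, and_assoc]
    rw [this]
    exact (isOpen_lt continuous_const c3).inter
      ((isOpen_lt continuous_const c1).inter (isOpen_lt continuous_const c2))
  have hUsub : U ⊆ convexHull ℝ ({a,b,c} : Set Pt) := by
    rintro y ⟨hyu, hyv, hyw⟩
    exact combo_mem_triangle hyu.le hyv.le hyw.le (bary_sum a b c y) (bary_combo hd y)
  have hxU : x ∈ U := ⟨hu' ▸ hu, hv' ▸ hv, hw' ▸ hw⟩
  exact interior_maximal hUsub hUopen hxU

lemma mul_nonneg_nonpos {a b : ℝ} (ha : a ≤ 0) (hb : b ≤ 0) : 0 ≤ a * b := by nlinarith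

lemma apply_combo (f : Pt →L[ℝ] ℝ) {x a b c : Pt} {u v w : ℝ}
    (h : x = u • a + v • b + w • c) : f x = u * f a + v * f b + w * f c := by
  rw [h, map_add, map_add, map_smul, map_smul, map_smul]
  simp [smul_eq_mul]

open Classical in
/-- Merging an empty ear at a hull vertex `p` into the element of a convex decomposition
of `P \ {p}` containing the edge `p⁻ p⁺` yields a convex decomposition of `P` of the
same cardinality. -/
theorem merge_ear_decomp (P : Finset Pt) (hgp : GenPos P) (hn : 4 ≤ P.card)
    (pm p pp : Pt) (hp : p ∈ hullB P)
    (h1 : IsHullEdge P pm p) (h2 : IsHullEdge P p pp) (hne : pm ≠ pp)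
    (hempty : interior (convexHull ℝ ({pm, p, pp} : Set Pt)) ∩ (P : Set Pt) = ∅)
    (D : Finset (Set Pt)) (hD : IsConvexDecomp (P.erase p) D)
    (C : Set Pt) (hC : C ∈ D)
    (hedge' : IsHullEdge (P.erase p) pm pp)
    (hCedge : segment ℝ pm pp ⊆ frontier C) :
    IsConvexDecomp P (insert (convexHull ℝ (C ∪ {p})) (D.erase C)) ∧
      (insert (convexHull ℝ (C ∪ {p})) (D.erase C)).card = D.card := by
  classical
  obtain ⟨hDpoly, hDdisj, hDunion, hDnoint⟩ := hD
  have hpP : p ∈ P := (Finset.mem_filter.1 hp).1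
  have hpmP : pm ∈ P := (Finset.mem_filter.1 h1.1).1
  have hppP : pp ∈ P := (Finset.mem_filter.1 h2.2.1).1
  have hpmp : pm ≠ p := h1.2.2.1
  have hppp : p ≠ pp := h2.2.2.1
  have hcoe : ((P.erase p : Finset Pt) : Set Pt) = (P : Set Pt) \ {p} := Finset.coe_erase p P
  have hpmE : pm ∈ P.erase p := Finset.mem_erase.2 ⟨hpmp, hpmP⟩
  have hppE : pp ∈ P.erase p := Finset.mem_erase.2 ⟨Ne.symm hppp, hppP⟩
  set S : Set Pt := (P : Set Pt) with hS
  set S' : Set Pt := ((P.erase p : Finset Pt) : Set Pt) with hS'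
  have hpS : p ∈ S := Finset.mem_coe.2 hpP
  have hS'S : S' ⊆ S := by rw [hcoe]; exact Set.diff_subset
  have hSfin : S.Finite := P.finite_toSet
  have hS'fin : S'.Finite := (P.erase p).finite_toSet
  have hconvS'S : convexHull ℝ S' ⊆ convexHull ℝ S := convexHull_mono hS'S
  have noncol : ¬ Collinear ℝ ({pm, p, pp} : Set Pt) :=
    hgp pm hpmP p hpP pp hppP hpmp hppp hne
  -- a fourth point
  have hq0ex : (((P.erase p).erase pm).erase pp).Nonempty := by
    rw [← Finset.card_pos]
    have t0 : 3 ≤ (P.erase p).card := by rw [Finset.card_erase_of_mem hpP]; omega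
    have t1 := Finset.pred_card_le_card_erase (s := P.erase p) (a := pm)
    have t2 := Finset.pred_card_le_card_erase (s := (P.erase p).erase pm) (a := pp)
    omega
  obtain ⟨q0, hq0mem⟩ := hq0ex
  have hq0pp : q0 ≠ pp := (Finset.mem_erase.1 hq0mem).1
  have hq0pm : q0 ≠ pm := (Finset.mem_erase.1 (Finset.mem_erase.1 hq0mem).2).1
  have hq0E : q0 ∈ P.erase p := (Finset.mem_erase.1 (Finset.mem_erase.1 hq0mem).2).2
  have hq0P : q0 ∈ P := Finset.mem_of_mem_erase hq0E
  have hq0p : q0 ≠ p := (Finset.mem_erase.1 hq0E).1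
  have noncol' : ¬ Collinear ℝ ({pm, pp, q0} : Set Pt) :=
    hgp pm hpmP pp hppP q0 hq0P hne (Ne.symm hq0pp) (Ne.symm hq0pm)
  -- interiors nonempty
  have hintS : (interior (convexHull ℝ S)).Nonempty :=
    interior_hull_nonempty (Finset.mem_coe.2 hpmP) (Finset.mem_coe.2 hpP)
      (Finset.mem_coe.2 hppP) noncol
  have hintS' : (interior (convexHull ℝ S')).Nonempty :=
    interior_hull_nonempty (Finset.mem_coe.2 hpmE) (Finset.mem_coe.2 hppE)
      (Finset.mem_coe.2 hq0E) noncol'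
  -- supporting functionals
  obtain ⟨f, hf0, hfeq, hfle⟩ := support_of_frontier_seg S' hS'fin hintS' hedge'.2.2.2
  obtain ⟨g, hg0, hgeq, hgle⟩ := support_of_frontier_seg S hSfin hintS h1.2.2.2
  obtain ⟨h3, hh0, hheq, hhle⟩ := support_of_frontier_seg S hSfin hintS h2.2.2.2
  -- strict inequalities off the support lines
  have hflt : ∀ q ∈ P.erase p, q ≠ pm → q ≠ pp → f q < f pm := by
    intro q hq hq1 hq2
    have hle := hfle q (subset_convexHull ℝ S' (Finset.mem_coe.2 hq))
    rcases lt_or_eq_of_le hle with h | h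
    · exact h
    · exact absurd (collinear_of_line f hf0 pm pp q hfeq h)
        (hgp pm hpmP pp hppP q (Finset.mem_of_mem_erase hq) hne (Ne.symm hq2) (Ne.symm hq1))
  have hglt : ∀ q ∈ P, q ≠ pm → q ≠ p → g q < g pm := by
    intro q hq hq1 hq2
    have hle := hgle q (subset_convexHull ℝ S (Finset.mem_coe.2 hq))
    rcases lt_or_eq_of_le hle with h | h
    · exact h
    · exact absurd (collinear_of_line g hg0 pm p q hgeq h)
        (hgp pm hpmP p hpP q hq hpmp (Ne.symm hq2) (Ne.symm hq1))
  have hhlt : ∀ q ∈ P, q ≠ p → q ≠ pp → h3 q < h3 p := by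
    intro q hq hq1 hq2
    have hle := hhle q (subset_convexHull ℝ S (Finset.mem_coe.2 hq))
    rcases lt_or_eq_of_le hle with h | h
    · exact h
    · exact absurd (collinear_of_line h3 hh0 p pp q hheq h)
        (hgp p hpP pp hppP q hq hppp (Ne.symm hq2) (Ne.symm hq1))
  have hgpp : g pp < g pm := hglt pp hppP (Ne.symm hne) (Ne.symm hppp)
  have hhpm : h3 pm < h3 p := hhlt pm hpmP hpmp hne
  have hdT : detP pm p pp ≠ 0 := fun h0 => noncol (collinear_of_det_eq pm p pp h0)
  -- the crucial strict inequality : p is strictly outside the support line of pm pp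
  have hfp : f pm < f p := by
    by_contra hle
    push_neg at hle
    rcases lt_or_eq_of_le hle with hplt | hpeq
    · -- q0 would be in the interior of the triangle
      set u := bU pm p pp q0 with hu
      set v := bV pm p pp q0 with hv
      set w := bW pm p pp q0 with hw
      have hsum : u + v + w = 1 := bary_sum pm p pp q0
      have hcombo : q0 = u • pm + v • p + w • pp := bary_combo hdT q0
      have ef : f q0 = u * f pm + v * f p + w * f pp := apply_combo f hcombo
      have eg : g q0 = u * g pm + v * g p + w * g pp := apply_combo g hcombo
      have eh : h3 q0 = u * h3 pm + v * h3 p + w * h3 pp := apply_combo h3 hcombo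
      have hfq0 : f q0 < f pm := hflt q0 hq0E hq0pm hq0pp
      have hgq0 : g q0 < g pm := hglt q0 hq0P hq0pm hq0p
      have hhq0 : h3 q0 < h3 p := hhlt q0 hq0P hq0p hq0pp
      have ef' : f q0 = f pm + v * (f p - f pm) := by
        rw [ef, hfeq]; linear_combination (f pm) * hsum
      have eg' : g q0 = g pm + w * (g pp - g pm) := by
        rw [eg, hgeq]; linear_combination (g pm) * hsum
      have eh' : h3 q0 = h3 p + u * (h3 pm - h3 p) := by
        rw [eh, hheq]; linear_combination (h3 p) * hsum
      have hvpos : 0 < v := by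
        by_contra hv'
        push_neg at hv'
        have : 0 ≤ v * (f p - f pm) := mul_nonneg_nonpos hv' (by linarith)
        linarith
      have hwpos : 0 < w := by
        by_contra hw'
        push_neg at hw'
        have : 0 ≤ w * (g pp - g pm) := mul_nonneg_nonpos hw' (by linarith)
        linarith
      have hupos : 0 < u := by
        by_contra hu'
        push_neg at hu'
        have : 0 ≤ u * (h3 pm - h3 p) := mul_nonneg_nonpos hu' (by linarith)
        linarith
      have hq0int : q0 ∈ interior (convexHull ℝ ({pm, p, pp} : Set Pt)) :=
        mem_interior_triangle noncol hsum hcombo hupos hvpos hwpos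
      have : q0 ∈ interior (convexHull ℝ ({pm, p, pp} : Set Pt)) ∩ (P : Set Pt) :=
        ⟨hq0int, Finset.mem_coe.2 hq0P⟩
      rw [hempty] at this
      exact this
    · exact absurd (collinear_of_line f hf0 pm pp p hfeq hpeq)
        (hgp pm hpmP pp hppP p hpP hne (Ne.symm hppp) hpmp)
  -- barycentric sign facts for points of the hull of P
  have hcoords : ∀ y ∈ convexHull ℝ S,
      (f y - f pm = bV pm p pp y * (f p - f pm)) ∧ 0 ≤ bW pm p pp y ∧ 0 ≤ bU pm p pp y := by
    intro y hy
    have hsum := bary_sum pm p pp y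
    have hcombo := bary_combo hdT y
    have ef' : f y = f pm + bV pm p pp y * (f p - f pm) := by
      rw [apply_combo f hcombo, hfeq]; linear_combination (f pm) * hsum
    have eg' : g y = g pm + bW pm p pp y * (g pp - g pm) := by
      rw [apply_combo g hcombo, hgeq]; linear_combination (g pm) * hsum
    have eh' : h3 y = h3 p + bU pm p pp y * (h3 pm - h3 p) := by
      rw [apply_combo h3 hcombo, hheq]; linear_combination (h3 p) * hsum
    have hgy : g y ≤ g pm := hgle y hy
    have hhy : h3 y ≤ h3 p := hhle y hy
    refine ⟨by linarith, ?_, ?_⟩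
    · by_contra hw'
      push_neg at hw'
      have : 0 < bW pm p pp y * (g pp - g pm) := mul_pos_of_neg_of_neg hw' (by linarith)
      linarith
    · by_contra hu'
      push_neg at hu'
      have : 0 < bU pm p pp y * (h3 pm - h3 p) := mul_pos_of_neg_of_neg hu' (by linarith)
      linarith
  have hwedge : ∀ y ∈ convexHull ℝ S, f pm ≤ f y →
      y ∈ convexHull ℝ ({pm, p, pp} : Set Pt) := by
    intro y hy hyge
    obtain ⟨e1, hw, hu⟩ := hcoords y hy
    have hvnn : 0 ≤ bV pm p pp y := by
      by_contra hv'
      push_neg at hv'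
      have : bV pm p pp y * (f p - f pm) < 0 :=
        mul_neg_of_neg_of_pos hv' (by linarith)
      linarith
    exact combo_mem_triangle hu hvnn hw (bary_sum pm p pp y) (bary_combo hdT y)
  have hlevel : ∀ y ∈ convexHull ℝ S, f y = f pm → y ∈ segment ℝ pm pp := by
    intro y hy hyα
    obtain ⟨e1, hw, hu⟩ := hcoords y hy
    have hv0 : bV pm p pp y = 0 := by
      rcases mul_eq_zero.1 (show bV pm p pp y * (f p - f pm) = 0 by linarith) with h | h
      · exact h
      · exfalso; linarith [sub_ne_zero.2 (ne_of_gt hfp)]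
    have hsum := bary_sum pm p pp y
    have hcombo := bary_combo hdT y
    rw [hv0] at hcombo hsum
    rw [zero_smul, add_zero] at hcombo
    exact ⟨bU pm p pp y, bW pm p pp y, hu, hw, by linarith, hcombo.symm⟩
  -- facts about C
  obtain ⟨V, hVsub, hVcard, hCeq⟩ := hDpoly C hC
  have hCconv : Convex ℝ C := by rw [hCeq]; exact convex_convexHull ℝ _
  have hCclosed : IsClosed C := by
    rw [hCeq]; exact (V.finite_toSet.isCompact_convexHull ℝ).isClosed
  have hCsubS' : C ⊆ convexHull ℝ S' := by
    rw [hCeq]; exact convexHull_mono (Finset.coe_subset.2 hVsub)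
  have hsegC : segment ℝ pm pp ⊆ C := by
    intro y hy
    have := frontier_subset_closure (hCedge hy)
    rwa [hCclosed.closure_eq] at this
  have hpmC : pm ∈ C := hsegC (left_mem_segment ℝ pm pp)
  have hppC : pp ∈ C := hsegC (right_mem_segment ℝ pm pp)
  have hCint : (interior C).Nonempty := by
    obtain ⟨t, hts, ht3⟩ := Finset.exists_subset_card_eq hVcard
    obtain ⟨a, b, c, hab, hac, hbc, rfl⟩ := Finset.card_eq_three.1 ht3
    have haV : a ∈ V := hts (by simp)
    have hbV : b ∈ V := hts (by simp)
    have hcV : c ∈ V := hts (by simp)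
    have haP : a ∈ P := Finset.mem_of_mem_erase (hVsub haV)
    have hbP : b ∈ P := Finset.mem_of_mem_erase (hVsub hbV)
    have hcP : c ∈ P := Finset.mem_of_mem_erase (hVsub hcV)
    rw [hCeq]
    exact interior_hull_nonempty (Finset.mem_coe.2 haV) (Finset.mem_coe.2 hbV)
      (Finset.mem_coe.2 hcV) (hgp a haP b hbP c hcP hab hbc hac)
  -- the triangle
  set T : Set Pt := convexHull ℝ ({pm, p, pp} : Set Pt) with hT
  have hTsubS : T ⊆ convexHull ℝ S := by
    rw [hT]
    apply convexHull_mono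
    rintro x (rfl | rfl | rfl)
    · exact Finset.mem_coe.2 hpmP
    · exact Finset.mem_coe.2 hpP
    · exact Finset.mem_coe.2 hppP
  have hTf : ∀ y ∈ T, f pm ≤ f y := by
    intro y hy
    rw [hT] at hy
    have hcv : Convex ℝ {w : Pt | f pm ≤ f w} := convex_halfSpace_ge f.toLinearMap.isLinear (f pm)
    have hsub : ({pm, p, pp} : Set Pt) ⊆ {w : Pt | f pm ≤ f w} := by
      intro x hx
      simp only [Set.mem_insert_iff, Set.mem_singleton_iff] at hx
      rcases hx with h | h | h
      · rw [Set.mem_setOf_eq, h]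
      · rw [Set.mem_setOf_eq, h]; exact hfp.le
      · rw [Set.mem_setOf_eq, h]; exact hfeq.ge
    exact convexHull_min hsub hcv hy
  -- the key structural identity
  have hCT : convexHull ℝ (C ∪ {p}) = C ∪ T := by
    apply Set.Subset.antisymm
    · have hCne : C.Nonempty := ⟨pm, hpmC⟩
      rw [Set.union_singleton, convexHull_insert hCne, hCconv.convexHull_eq]
      intro x hx
      rw [mem_convexJoin] at hx
      obtain ⟨p', hp', z, hz, hxseg⟩ := hx
      rw [Set.mem_singleton_iff] at hp'
      subst hp'
      have hzS : z ∈ convexHull ℝ S := hconvS'S (hCsubS' hz)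
      have hxS : x ∈ convexHull ℝ S :=
        (convex_convexHull ℝ S).segment_subset (subset_convexHull ℝ S hpS) hzS hxseg
      rcases le_or_gt (f pm) (f x) with hge | hlt
      · exact Or.inr (hwedge x hxS hge)
      · left
        obtain ⟨y, hyseg, hyα, hxyz⟩ := cross_seg f hfp (hfle z (hCsubS' hz)) hxseg hlt.le
        have hyS : y ∈ convexHull ℝ S :=
          (convex_convexHull ℝ S).segment_subset (subset_convexHull ℝ S hpS) hzS hyseg
        have hyC : y ∈ C := hsegC (hlevel y hyS hyα)
        exact hCconv.segment_subset hyC hz hxyz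
    · apply Set.union_subset
      · exact fun x hx => subset_convexHull ℝ _ (Set.mem_union_left _ hx)
      · rw [hT]
        apply convexHull_mono
        rintro x (rfl | rfl | rfl)
        · exact Or.inl hpmC
        · exact Or.inr rfl
        · exact Or.inl hppC
  have hNP : convexHull ℝ (C ∪ {p}) ⊆ convexHull ℝ S := by
    rw [hCT]
    exact Set.union_subset (fun x hx => hconvS'S (hCsubS' hx)) hTsubS
  have hsubD : ∀ B ∈ D, B ⊆ convexHull ℝ S' := by
    intro B hB
    intro x hxB
    rw [← hDunion]
    exact Set.mem_biUnion hB hxB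
  have hlow : ∀ x ∈ convexHull ℝ S, f x < f pm → x ∈ convexHull ℝ S' := by
    intro x hxS hxlt
    have hins : insert p S' = S := by
      rw [hcoe, Set.insert_diff_singleton, Set.insert_eq_self.2 hpS]
    have hS'ne : S'.Nonempty := ⟨pm, Finset.mem_coe.2 hpmE⟩
    have hx' : x ∈ convexJoin ℝ {p} (convexHull ℝ S') := by
      rw [← convexHull_insert hS'ne, hins]; exact hxS
    rw [mem_convexJoin] at hx'
    obtain ⟨p', hp', z, hz, hxseg⟩ := hx'
    rw [Set.mem_singleton_iff] at hp'
    subst hp'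
    obtain ⟨y, hyseg, hyα, hxyz⟩ := cross_seg f hfp (hfle z hz) hxseg hxlt.le
    have hyS : y ∈ convexHull ℝ S :=
      (convex_convexHull ℝ S).segment_subset (subset_convexHull ℝ S hpS) (hconvS'S hz) hyseg
    have hyC' : y ∈ convexHull ℝ S' := hCsubS' (hsegC (hlevel y hyS hyα))
    exact (convex_convexHull ℝ S').segment_subset hyC' hz hxyz
  -- disjointness of the new piece from old pieces
  have hdisjN : ∀ B ∈ D.erase C,
      interior (convexHull ℝ (C ∪ {p})) ∩ interior B = ∅ := by
    intro B hB
    rw [Set.eq_empty_iff_forall_notMem]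
    rintro x ⟨hxN, hxB⟩
    have hBD := Finset.mem_of_mem_erase hB
    have hBC : B ≠ C := Finset.ne_of_mem_erase hB
    have hfxlt : f x < f pm :=
      interior_subset_lt f hf0 (fun y hy => hfle y (hsubD B hBD hy)) hxB
    have hxCT : x ∈ C ∪ T := by rw [← hCT]; exact interior_subset hxN
    have hxC : x ∈ C := by
      rcases hxCT with h | h
      · exact h
      · exact absurd (hTf x h) (by linarith)
    obtain ⟨z0, hz0⟩ := hCint
    obtain ⟨zz, hz1, hz2⟩ := open_inter_interior hCconv hz0 isOpen_interior hxC hxB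
    have hded := hDdisj C hC B hBD (Ne.symm hBC)
    rw [Set.eq_empty_iff_forall_notMem] at hded
    exact hded zz ⟨hz1, hz2⟩
  have hNnotin : convexHull ℝ (C ∪ {p}) ∉ D.erase C := by
    intro hmem
    have hpN : p ∈ convexHull ℝ (C ∪ {p}) :=
      subset_convexHull ℝ _ (Set.mem_union_right _ rfl)
    have : f p ≤ f pm := hfle p (hsubD _ (Finset.mem_of_mem_erase hmem) hpN)
    linarith
  constructor
  · refine ⟨?_, ?_, ?_, ?_⟩
    · -- polygons
      intro A hA
      rcases Finset.mem_insert.1 hA with rfl | hA'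
      · refine ⟨insert p V, ?_, ?_, ?_⟩
        · exact Finset.insert_subset hpP (hVsub.trans (Finset.erase_subset p P))
        · exact le_trans hVcard (Finset.card_le_card (Finset.subset_insert p V))
        · rw [hCeq, convexHull_convexHull_union_left, Finset.coe_insert,
            ← Set.union_singleton]
      · obtain ⟨W, hW, h3W, heq⟩ := hDpoly A (Finset.mem_of_mem_erase hA')
        exact ⟨W, hW.trans (Finset.erase_subset p P), h3W, heq⟩
    · -- disjoint interiors
      intro A hA B hB hAB
      rcases Finset.mem_insert.1 hA with rfl | hA'
      · rcases Finset.mem_insert.1 hB with rfl | hB'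
        · exact absurd rfl hAB
        · exact hdisjN B hB'
      · rcases Finset.mem_insert.1 hB with rfl | hB'
        · rw [Set.inter_comm]; exact hdisjN A hA'
        · exact hDdisj A (Finset.mem_of_mem_erase hA') B (Finset.mem_of_mem_erase hB') hAB
    · -- union
      rw [Finset.set_biUnion_insert]
      have hDins : D = insert C (D.erase C) := (Finset.insert_erase hC).symm
      have hEU : (⋃ A ∈ D, (A : Set Pt)) = C ∪ ⋃ A ∈ D.erase C, (A : Set Pt) := by
        conv_lhs => rw [hDins]
        rw [Finset.set_biUnion_insert]
      apply Set.Subset.antisymm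
      · apply Set.union_subset hNP
        apply Set.iUnion₂_subset
        intro A hA
        exact (hsubD A (Finset.mem_of_mem_erase hA)).trans hconvS'S
      · intro x hx
        rcases le_or_gt (f pm) (f x) with hge | hlt
        · left
          rw [hCT]
          exact Or.inr (hwedge x hx hge)
        · have hx' : x ∈ convexHull ℝ S' := hlow x hx hlt
          rw [← hDunion, hEU] at hx'
          rcases hx' with h | h
          · left; rw [hCT]; exact Or.inl h
          · right; exact h
    · -- no point of P in any interior
      intro A hA q hq
      rcases Finset.mem_insert.1 hA with rfl | hA'
      · rw [hCT]
        intro hqint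
        have hbound : ∀ y ∈ C ∪ T, y ∈ convexHull ℝ S := by
          rintro y (h | h)
          · exact hconvS'S (hCsubS' h)
          · exact hTsubS h
        have hgq : g q < g pm :=
          interior_subset_lt g hg0 (fun y hy => hgle y (hbound y hy)) hqint
        have hhq : h3 q < h3 p :=
          interior_subset_lt h3 hh0 (fun y hy => hhle y (hbound y hy)) hqint
        rcases lt_trichotomy (f q) (f pm) with hlt | heq | hgt
        · have hqC : q ∈ interior C := by
            have hUopen : IsOpen (interior (C ∪ T) ∩ {y : Pt | f y < f pm}) :=
              isOpen_interior.inter (isOpen_lt f.continuous continuous_const)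
            have hUsub : interior (C ∪ T) ∩ {y : Pt | f y < f pm} ⊆ C := by
              rintro y ⟨hy1, hy2⟩
              rcases interior_subset hy1 with h | h
              · exact h
              · exact absurd (hTf y h) (by exact not_le.2 hy2)
            exact interior_maximal hUsub hUopen ⟨hqint, hlt⟩
          have hqp : q ≠ p := by rintro rfl; linarith
          exact hDnoint C hC q (Finset.mem_erase.2 ⟨hqp, hq⟩) hqC
        · by_cases hqpm : q = pm
          · rw [hqpm] at hgq; linarith
          · by_cases hqpp : q = pp
            · rw [hqpp] at hhq; linarith [hheq]
            · exact absurd (collinear_of_line f hf0 pm pp q hfeq heq)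
                (hgp pm hpmP pp hppP q hq hne (Ne.symm hqpp) (Ne.symm hqpm))
        · by_cases hqp : q = p
          · rw [hqp] at hgq; linarith [hgeq]
          · have : f q ≤ f pm :=
              hfle q (subset_convexHull ℝ S' (Finset.mem_coe.2 (Finset.mem_erase.2 ⟨hqp, hq⟩)))
            linarith
      · by_cases hqp : q = p
        · intro hqint
          have : f q ≤ f pm :=
            hfle q (hsubD A (Finset.mem_of_mem_erase hA') (interior_subset hqint))
          rw [hqp] at this
          linarith
        · exact hDnoint A (Finset.mem_of_mem_erase hA') q (Finset.mem_erase.2 ⟨hqp, hq⟩)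
  · -- cardinality
    rw [Finset.card_insert_of_notMem hNnotin, Finset.card_erase_of_mem hC]
    have : 1 ≤ D.card := Finset.card_pos.2 ⟨C, hC⟩
    omega
end

section
/- Let P be a finite point set in general position in the plane whose convex hull has vertices p_0,…,p_{b−1} counterclockwise with b ≥ 3, and suppose q is a hull vertex of I(P) with successor q⁺ on CH(I(P)) such that the open outer half-plane H(q) contains at least 3 hull vertices of P, say p_j, p_{j+1}, p_{j+2}. Then the interior of at least one triangle p_{k−1} p_k p_{k+1} (k ∈ {j+1}) contains no point of P. -/
/-- A hull vertex of `P` is not in the interior of the convex hull of any subset of `P`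
(provided `P` has another point). -/
lemma vertex_not_interior (P : Finset Pt) (p : Pt) (hp : p ∈ hullB P)
    (hne : ((P : Set Pt) \ {p}).Nonempty) (s : Set Pt) (hs : s ⊆ (P : Set Pt)) :
    p ∉ interior (convexHull ℝ s) := by
  intro hmem
  have hpP : p ∈ P ∧ p ∉ convexHull ℝ ((P : Set Pt) \ {p}) := by
    simpa [hullB] using hp
  set S : Set Pt := (P : Set Pt) \ {p} with hS
  have hSfin : S.Finite := P.finite_toSet.diff
  have hclosed : IsClosed (convexHull ℝ S) := hSfin.isClosed_convexHull (𝕜 := ℝ)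
  obtain ⟨f, u, hfu, hup⟩ :=
    geometric_hahn_banach_closed_point (convex_convexHull ℝ S) hclosed hpP.2
  obtain ⟨a, ha⟩ := hne
  have hfa : f a < u := hfu a (subset_convexHull ℝ S ha)
  have hsub : convexHull ℝ s ⊆ {x | f x ≤ f p} := by
    apply convexHull_min
    · intro y hy
      by_cases hyp : y = p
      · simp [hyp]
      · have hyS : y ∈ S := ⟨hs hy, hyp⟩
        exact le_of_lt (lt_trans (hfu y (subset_convexHull ℝ S hyS)) hup)
    · exact convex_halfSpace_le (IsLinearMap.mk f.map_add f.map_smul) (f p)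
  rw [mem_interior_iff_mem_nhds, Metric.mem_nhds_iff] at hmem
  obtain ⟨ε, hε, hball⟩ := hmem
  set v : Pt := p - a with hv
  have hfv : 0 < f v := by
    have : f v = f p - f a := by simp [hv, map_sub]
    rw [this]; linarith
  have hv0 : v ≠ 0 := by
    intro h; rw [h] at hfv; simp at hfv
  have hnv : (0 : ℝ) < ‖v‖ := norm_pos_iff.mpr hv0
  set c : ℝ := ε / (2 * ‖v‖) with hc
  have hcpos : 0 < c := by positivity
  set z : Pt := p + c • v with hz
  have hzball : z ∈ Metric.ball p ε := by
    rw [Metric.mem_ball, dist_eq_norm]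
    have : z - p = c • v := by simp [hz]
    rw [this, norm_smul, Real.norm_eq_abs, abs_of_pos hcpos, hc]
    rw [div_mul_eq_mul_div]
    rw [div_lt_iff₀ (by positivity)]
    nlinarith
  have hle : f z ≤ f p := hsub (hball hzball)
  have hgt : f p < f z := by
    have : f z = f p + c * f v := by simp [hz, map_add, map_smul]
    rw [this]; nlinarith
  linarith

/-- If the outer open half-plane of a hull edge `q q⁺` of `I(P)` contains three
consecutive hull vertices `p_j, p_{j+1}, p_{j+2}` of `P`, then the interior of the
triangle `p_j p_{j+1} p_{j+2}` contains no point of `P`. -/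
theorem three_in_halfplane_empty_triangle (P : Finset Pt) (hgp : GenPos P)
    (hi : (intI P).Nonempty) (q q' : Pt) (H : Set Pt)
    (hedge : IsHullEdge (intI P) q q') (hH : IsOuterHalf (intI P) q q' H)
    (pj pj1 pj2 : Pt) (h1 : IsHullEdge P pj pj1) (h2 : IsHullEdge P pj1 pj2)
    (hne : pj ≠ pj2) (hin : pj ∈ H) (hin1 : pj1 ∈ H) (hin2 : pj2 ∈ H) :
    interior (convexHull ℝ ({pj, pj1, pj2} : Set Pt)) ∩ (P : Set Pt) = ∅ := by
  obtain ⟨f, hf0, hfq, hHdef, hfle⟩ := hH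
  have hBsub : ∀ y ∈ hullB P, y ∈ P := by
    intro y hy
    have h' : y ∈ P ∧ y ∉ convexHull ℝ ((P : Set Pt) \ {y}) := by simpa [hullB] using hy
    exact h'.1
  have hpjP : pj ∈ P := hBsub _ h1.1
  have hpj1P : pj1 ∈ P := hBsub _ h1.2.1
  have hpj2P : pj2 ∈ P := hBsub _ h2.2.1
  set s : Set Pt := {pj, pj1, pj2} with hsdef
  have hsP : s ⊆ (P : Set Pt) := by
    intro y hy
    rcases hy with rfl | rfl | rfl <;> simpa
  ext x
  simp only [Set.mem_inter_iff, Finset.mem_coe, Set.mem_empty_iff_false, iff_false, not_and]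
  intro hxT hxP
  -- the triangle lies in H, so f q < f x
  have hHconv : Convex ℝ H := by
    rw [hHdef]
    exact convex_halfSpace_gt (IsLinearMap.mk f.map_add f.map_smul) (f q)
  have hTH : convexHull ℝ s ⊆ H := by
    apply convexHull_min _ hHconv
    intro y hy
    rcases hy with rfl | rfl | rfl
    · exact hin
    · exact hin1
    · exact hin2
  have hxH : x ∈ H := hTH (interior_subset hxT)
  have hfx : f q < f x := by rw [hHdef] at hxH; exact hxH
  -- x is none of the three vertices
  have hne01 : pj ≠ pj1 := h1.2.2.1
  have hne12 : pj1 ≠ pj2 := h2.2.2.1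
  have hx0 : x ≠ pj := by
    rintro rfl
    exact vertex_not_interior P x h1.1
      ⟨pj1, by simpa using ⟨hpj1P, fun h => hne01 h.symm⟩⟩ s hsP hxT
  have hx1 : x ≠ pj1 := by
    rintro rfl
    exact vertex_not_interior P x h1.2.1
      ⟨pj, by simpa using ⟨hpjP, hne01⟩⟩ s hsP hxT
  have hx2 : x ≠ pj2 := by
    rintro rfl
    exact vertex_not_interior P x h2.2.1
      ⟨pj1, by simpa using ⟨hpj1P, hne12⟩⟩ s hsP hxT
  -- hence x is an interior point of P
  have hxI : x ∈ intI P := by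
    rw [intI, Finset.mem_sdiff]
    refine ⟨hxP, fun hxB => ?_⟩
    have hnot : x ∉ convexHull ℝ ((P : Set Pt) \ {x}) := by
      have h' : x ∈ P ∧ x ∉ convexHull ℝ ((P : Set Pt) \ {x}) := by simpa [hullB] using hxB
      exact h'.2
    apply hnot
    have hsub2 : s ⊆ (P : Set Pt) \ {x} := by
      intro y hy
      refine ⟨hsP hy, ?_⟩
      rcases hy with rfl | rfl | rfl
      · simpa using fun h => hx0 h.symm
      · simpa using fun h => hx1 h.symm
      · simpa using fun h => hx2 h.symm
    exact convexHull_mono hsub2 (interior_subset hxT)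
  have := hfle x hxI
  linarith
end

section
/- Let Π₀ and Π₁ be convex decompositions of the closed regions CH(P) \ Int(CH(P')) and CH(P') respectively, where P' ⊆ P and both use only vertices from P with no point of P interior to any polygon. If 𝒫₀ ∈ Π₀ and 𝒫₁ ∈ Π₁ share a common edge e and conv(𝒫₀ ∪ 𝒫₁) = 𝒫₀ ∪ 𝒫₁ (i.e., their union is convex), then (Π₀ ∪ Π₁ \ {𝒫₀, 𝒫₁}) ∪ {𝒫₀ ∪ 𝒫₁} is a convex decomposition of P with |Π₀| + |Π₁| − 1 elements. -/
open Classical in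
private lemma aux_affineSpan_top {s : Set Pt} (h : ¬ Collinear ℝ s) : affineSpan ℝ s = ⊤ := by
  have hne : s.Nonempty := by
    rcases s.eq_empty_or_nonempty with rfl | hs
    · exact absurd (collinear_empty ℝ Pt) h
    · exact hs
  rw [AffineSubspace.affineSpan_eq_top_iff_vectorSpan_eq_top_of_nonempty ℝ Pt Pt hne]
  have h1 : ¬ Module.finrank ℝ (vectorSpan ℝ s) ≤ 1 := by
    rw [← collinear_iff_finrank_le_one]; exact h
  rw [not_le] at h1
  have h2 : Module.finrank ℝ (vectorSpan ℝ s) ≤ 2 := by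
    have := Submodule.finrank_le (vectorSpan ℝ s)
    simpa using this
  have h3 : Module.finrank ℝ Pt = 2 := by simp
  apply Submodule.eq_top_of_finrank_eq
  rw [h3]
  exact le_antisymm h2 h1

private lemma aux_interior_nonempty {V : Set Pt} (h : ¬ Collinear ℝ V) :
    (interior (convexHull ℝ V)).Nonempty := by
  rw [Convex.interior_nonempty_iff_affineSpan_eq_top (convex_convexHull ℝ V)]
  rw [affineSpan_convexHull]
  exact aux_affineSpan_top h

private lemma aux_mem_closure_interior {C : Set Pt} (hconv : Convex ℝ C) {z x : Pt}
    (hz : z ∈ interior C) (hx : x ∈ C) : x ∈ closure (interior C) := by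
  rw [Metric.mem_closure_iff]
  intro δ hδ
  set t : ℝ := min 1 (δ / (2 * (‖z - x‖ + 1))) with ht
  have hnorm : (0:ℝ) < ‖z - x‖ + 1 := by positivity
  have ht0 : 0 < t := by
    apply lt_min one_pos
    positivity
  have ht1 : t ≤ 1 := min_le_left _ _
  refine ⟨x + t • (z - x), hconv.add_smul_sub_mem_interior hx hz ⟨ht0, ht1⟩, ?_⟩
  rw [dist_eq_norm]
  have : x - (x + t • (z - x)) = (-t) • (z - x) := by module
  rw [this, norm_smul]
  simp only [norm_neg, Real.norm_eq_abs, abs_of_pos ht0]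
  calc t * ‖z - x‖ ≤ (δ / (2 * (‖z - x‖ + 1))) * ‖z - x‖ := by
        apply mul_le_mul_of_nonneg_right (min_le_right _ _) (norm_nonneg _)
    _ < δ := by
        rw [div_mul_eq_mul_div, div_lt_iff₀ (by positivity)]
        nlinarith [norm_nonneg (z - x)]

private lemma aux_closure_interior_eq {C : Set Pt} (hconv : Convex ℝ C) (hcl : IsClosed C)
    (hne : (interior C).Nonempty) : closure (interior C) = C := by
  obtain ⟨z, hz⟩ := hne
  refine subset_antisymm ?_ (fun x hx => aux_mem_closure_interior hconv hz hx)
  calc closure (interior C) ⊆ closure C := closure_mono interior_subset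
    _ = C := hcl.closure_eq

private lemma aux_support {C : Set Pt} (hconv : Convex ℝ C) (hcl : IsClosed C)
    {z : Pt} (hz : z ∈ interior C) {p : Pt} (hp : p ∉ interior C) :
    ∃ f : Pt →L[ℝ] ℝ, (∀ x ∈ C, f x ≤ f p) ∧ f z < f p := by
  obtain ⟨f, hf⟩ := geometric_hahn_banach_open_point hconv.interior isOpen_interior hp
  refine ⟨f, fun x hx => ?_, hf z hz⟩
  have hxc : x ∈ closure (interior C) := aux_mem_closure_interior hconv hz hx
  have hsub : closure (interior C) ⊆ {y | f y ≤ f p} :=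
    closure_minimal (fun y hy => (hf y hy).le) (isClosed_le f.continuous continuous_const)
  exact hsub hxc

private lemma aux_collinear_line {f : Pt →L[ℝ] ℝ} {u : Pt} (hu : f u ≠ 0) {q r s : Pt}
    (h1 : f q = f r) (h2 : f q = f s) : Collinear ℝ ({q, r, s} : Set Pt) := by
  have hrange : LinearMap.range (f : Pt →ₗ[ℝ] ℝ) = ⊤ := by
    rw [eq_top_iff]
    rintro x -
    exact ⟨(x / f u) • u, by simp [div_mul_cancel₀, hu]⟩
  have hker : Module.finrank ℝ (LinearMap.ker (f : Pt →ₗ[ℝ] ℝ)) = 1 := by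
    have := LinearMap.finrank_range_add_finrank_ker (f : Pt →ₗ[ℝ] ℝ)
    rw [hrange] at this
    simp only [finrank_top] at this
    have h2' : Module.finrank ℝ Pt = 2 := by simp
    have h1' : Module.finrank ℝ ℝ = 1 := Module.finrank_self ℝ
    omega
  rw [collinear_iff_finrank_le_one]
  have hle : vectorSpan ℝ ({q, r, s} : Set Pt) ≤ LinearMap.ker (f : Pt →ₗ[ℝ] ℝ) := by
    rw [vectorSpan_def]
    rw [Submodule.span_le]
    rintro v ⟨x, hx, y, hy, rfl⟩
    have hfx : f x = f q := by
      rcases hx with rfl | rfl | rfl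
      · rfl
      · exact h1.symm
      · exact h2.symm
    have hfy : f y = f q := by
      rcases hy with rfl | rfl | rfl
      · rfl
      · exact h1.symm
      · exact h2.symm
    simp only [SetLike.mem_coe, LinearMap.mem_ker]
    show f (x - y) = 0
    rw [map_sub, hfx, hfy, sub_self]
  calc Module.finrank ℝ (vectorSpan ℝ ({q, r, s} : Set Pt))
      ≤ Module.finrank ℝ (LinearMap.ker (f : Pt →ₗ[ℝ] ℝ)) := Submodule.finrank_mono hle
    _ = 1 := hker

private lemma aux_face {V : Finset Pt} {f : Pt →L[ℝ] ℝ} {c : ℝ} {x : Pt}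
    (hx : x ∈ convexHull ℝ (V : Set Pt)) (hle : ∀ v ∈ V, f v ≤ c) (hc : f x = c) :
    ∃ V' : Finset Pt, V' ⊆ V ∧ (∀ v ∈ V', f v = c) ∧ x ∈ convexHull ℝ (V' : Set Pt) := by
  classical
  rw [Finset.convexHull_eq] at hx
  obtain ⟨w, hw0, hw1, hwx⟩ := hx
  rw [Finset.centerMass_eq_of_sum_1 _ _ hw1] at hwx
  simp only [id] at hwx
  have hfs : f x = ∑ v ∈ V, w v * f v := by
    rw [← hwx, map_sum]
    simp [smul_eq_mul]
  have key : ∑ v ∈ V, w v * (c - f v) = 0 := by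
    have : ∑ v ∈ V, w v * (c - f v) = (∑ v ∈ V, w v) * c - ∑ v ∈ V, w v * f v := by
      rw [Finset.sum_mul, ← Finset.sum_sub_distrib]
      congr 1 with v
      ring
    rw [this, hw1, ← hfs, hc]
    ring
  have hzero : ∀ v ∈ V, w v * (c - f v) = 0 := by
    intro v hv
    have := (Finset.sum_eq_zero_iff_of_nonneg (fun v hv => by
      have := hw0 v hv
      have := hle v hv
      nlinarith)).1 key
    exact this v hv
  have hwc : ∀ v ∈ V, w v ≠ 0 → f v = c := by
    intro v hv hw
    rcases mul_eq_zero.1 (hzero v hv) with h | h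
    · exact absurd h hw
    · linarith [sub_eq_zero.1 h]
  set V' : Finset Pt := V.filter (fun v => f v = c) with hV'
  refine ⟨V', Finset.filter_subset _ _, fun v hv => (Finset.mem_filter.1 hv).2, ?_⟩
  have hsum' : ∑ v ∈ V', w v = 1 := by
    rw [← hw1]
    apply Finset.sum_filter_of_ne
    intro v hv hwv
    exact hwc v hv hwv
  have hx' : ∑ v ∈ V', w v • v = x := by
    rw [← hwx]
    apply Finset.sum_filter_of_ne
    intro v hv hwv
    refine hwc v hv fun h => hwv ?_
    rw [h, zero_smul]
  have := V'.centerMass_mem_convexHull (w := w) (fun v hv => hw0 v (Finset.filter_subset _ _ hv))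
    (by rw [hsum']; norm_num) (fun v hv => Finset.mem_coe.2 hv)
  rw [Finset.centerMass_eq_of_sum_1 _ _ hsum'] at this
  rwa [hx'] at this

set_option maxHeartbeats 1000000 in
open Classical in
/-- **Merging step.** If `Π₀` decomposes `CH(P) \ Int(CH(P'))` and `Π₁` decomposes
`CH(P')`, and elements `𝒫₀ ∈ Π₀`, `𝒫₁ ∈ Π₁` share a common edge and have convex union,
then replacing them by their union gives a convex decomposition of `P` with
`|Π₀| + |Π₁| − 1` elements. -/
theorem merge_decompositions (P P' : Finset Pt) (hgp : GenPos P) (hsub : P' ⊆ P)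
    (D0 D1 : Finset (Set Pt))
    (h0 : IsConvexDecompOfRegion P
      (convexHull ℝ (P : Set Pt) \ interior (convexHull ℝ (P' : Set Pt))) D0)
    (h1 : IsConvexDecompOfRegion P (convexHull ℝ (P' : Set Pt)) D1)
    (C0 C1 : Set Pt) (hC0 : C0 ∈ D0) (hC1 : C1 ∈ D1)
    (a b : Pt) (ha : a ∈ P) (hb : b ∈ P) (hab : a ≠ b)
    (hshared : segment ℝ a b ⊆ C0 ∩ C1)
    (hconv : convexHull ℝ (C0 ∪ C1) = C0 ∪ C1) :
    IsConvexDecompOfRegion P (convexHull ℝ (P : Set Pt))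
      (insert (C0 ∪ C1) (((D0 ∪ D1).erase C0).erase C1)) ∧
    (insert (C0 ∪ C1) (((D0 ∪ D1).erase C0).erase C1)).card = D0.card + D1.card - 1 := by
  classical
  obtain ⟨h0poly, h0disj, h0un, h0int⟩ := h0
  obtain ⟨h1poly, h1disj, h1un, h1int⟩ := h1
  set Q : Set Pt := convexHull ℝ (P' : Set Pt) with hQ
  set K : Set Pt := C0 ∪ C1 with hKdef
  -- basic properties of polygons
  have props : ∀ C : Set Pt, IsPolygonOn P C →
      Convex ℝ C ∧ IsClosed C ∧ (interior C).Nonempty := by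
    intro C hC
    obtain ⟨V, hVP, hV3, rfl⟩ := hC
    refine ⟨convex_convexHull ℝ _, V.finite_toSet.isClosed_convexHull ℝ, ?_⟩
    obtain ⟨T, hTV, hT3⟩ := Finset.exists_subset_card_eq hV3
    obtain ⟨u, v, w, huv, huw, hvw, rfl⟩ := Finset.card_eq_three.1 hT3
    have hu : u ∈ V := hTV (by simp)
    have hv : v ∈ V := hTV (by simp)
    have hw : w ∈ V := hTV (by simp)
    have hncol : ¬ Collinear ℝ ({u, v, w} : Set Pt) :=
      hgp u (hVP hu) v (hVP hv) w (hVP hw) huv hvw huw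
    refine (aux_interior_nonempty hncol).mono (interior_mono (convexHull_mono ?_))
    rintro x (rfl | rfl | rfl)
    · exact hu
    · exact hv
    · exact hw
  obtain ⟨hC0conv, hC0cl, hC0ne⟩ := props C0 (h0poly C0 hC0)
  obtain ⟨hC1conv, hC1cl, hC1ne⟩ := props C1 (h1poly C1 hC1)
  have hsubR0 : ∀ A ∈ D0, A ⊆ convexHull ℝ (P : Set Pt) \ interior Q := by
    intro A hA
    rw [← h0un]
    exact Set.subset_biUnion_of_mem (u := fun C => C) hA
  have hsubQ : ∀ B ∈ D1, B ⊆ Q := by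
    intro B hB
    rw [← h1un]
    exact Set.subset_biUnion_of_mem (u := fun C => C) hB
  have hdisj01 : ∀ A ∈ D0, ∀ B ∈ D1, interior A ∩ interior B = ∅ := by
    intro A hA B hB
    rw [Set.eq_empty_iff_forall_notMem]
    rintro x ⟨hxA, hxB⟩
    exact ((hsubR0 A hA) (interior_subset hxA)).2 (interior_mono (hsubQ B hB) hxB)
  have hC0C1 : C0 ≠ C1 := by
    intro h
    obtain ⟨z, hz⟩ := hC0ne
    have := hdisj01 C0 hC0 C1 hC1
    rw [← h, Set.eq_empty_iff_forall_notMem] at this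
    exact this z ⟨hz, hz⟩
  have hKconv : Convex ℝ K := hconv ▸ convex_convexHull ℝ (C0 ∪ C1)
  have hKcl : IsClosed K := hC0cl.union hC1cl
  have habC : a ∈ C0 ∩ C1 := hshared (left_mem_segment ℝ a b)
  have hbbC : b ∈ C0 ∩ C1 := hshared (right_mem_segment ℝ a b)
  -- disjointness of old pieces with K
  have hdisjC : ∀ C, C ∈ D0 ∪ D1 → C ≠ C0 → C ≠ C1 → interior C ∩ interior K = ∅ := by
    intro C hC hne0 hne1
    have hd0 : interior C ∩ interior C0 = ∅ := by
      rcases Finset.mem_union.1 hC with h | h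
      · exact h0disj C h C0 hC0 hne0
      · rw [Set.inter_comm]; exact hdisj01 C0 hC0 C h
    have hd1 : interior C ∩ interior C1 = ∅ := by
      rcases Finset.mem_union.1 hC with h | h
      · exact hdisj01 C h C1 hC1
      · exact h1disj C h C1 hC1 hne1
    rw [Set.eq_empty_iff_forall_notMem]
    rintro x ⟨hxC, hxK⟩
    have key : ∀ (A : Set Pt), Convex ℝ A → IsClosed A → (interior A).Nonempty →
        x ∈ A → interior C ∩ interior A = ∅ → False := by
      intro A hAc hAcl hAne hxA hdis
      have hcl : x ∈ closure (interior A) := by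
        rw [aux_closure_interior_eq hAc hAcl hAne]; exact hxA
      obtain ⟨y, hy⟩ := mem_closure_iff.1 hcl (interior C) isOpen_interior hxC
      rw [Set.eq_empty_iff_forall_notMem] at hdis
      exact hdis y hy
    rcases interior_subset hxK with h | h
    · exact key C0 hC0conv hC0cl hC0ne h hd0
    · exact key C1 hC1conv hC1cl hC1ne h hd1
  -- no point of P in the interior of K
  have hmain : ∀ p ∈ P, p ∉ interior K := by
    intro p hp hpK
    have hpC0 : p ∉ interior C0 := h0int C0 hC0 p hp
    have hpC1 : p ∉ interior C1 := h1int C1 hC1 p hp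
    obtain ⟨z0, hz0⟩ := hC0ne
    obtain ⟨z1, hz1⟩ := hC1ne
    obtain ⟨f, hf0, hfz0⟩ := aux_support hC0conv hC0cl hz0 hpC0
    obtain ⟨g, hg1, hgz1⟩ := aux_support hC1conv hC1cl hz1 hpC1
    obtain ⟨ε, hε, hball⟩ := Metric.mem_nhds_iff.1 (mem_interior_iff_mem_nhds.1 hpK)
    have hdisjv : ∀ v : Pt, f v ≤ 0 ∨ g v ≤ 0 := by
      intro v
      rcases eq_or_ne v 0 with rfl | hv
      · left; simp
      · have hvn : (0:ℝ) < ‖v‖ := norm_pos_iff.2 hv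
        set δ : ℝ := ε / (2 * ‖v‖) with hδ
        have hδ0 : 0 < δ := by positivity
        have hmem : p + δ • v ∈ K := by
          apply hball
          rw [Metric.mem_ball, dist_eq_norm]
          have h1 : p + δ • v - p = δ • v := by module
          have h2 : δ * ‖v‖ = ε / 2 := by
            rw [hδ]; field_simp
          rw [h1, norm_smul, Real.norm_eq_abs, abs_of_pos hδ0, h2]
          linarith
        have hlin : ∀ (F : Pt →L[ℝ] ℝ), F (p + δ • v) = F p + δ * F v := by
          intro F
          rw [map_add, map_smul, smul_eq_mul]
        rcases hmem with h | h
        · left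
          have := hf0 _ h
          rw [hlin f] at this
          nlinarith
        · right
          have := hg1 _ h
          rw [hlin g] at this
          nlinarith
    set u : Pt := p - z0 with hu
    have hfu : 0 < f u := by rw [hu, map_sub]; linarith
    have hker : ∀ v : Pt, f v = 0 → g v ≤ 0 := by
      intro v hfv
      by_contra hgv
      push_neg at hgv
      rcases le_or_gt 0 (g u) with h | h
      · rcases hdisjv (v + u) with h' | h'
        · rw [map_add, hfv] at h'; nlinarith
        · rw [map_add] at h'; nlinarith
      · set δ : ℝ := g v / (-2 * g u) with hδ
        have hδ0 : 0 < δ := by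
          apply div_pos hgv
          nlinarith
        have hgu : δ * g u = -(g v) / 2 := by
          rw [hδ, div_mul_eq_mul_div, div_eq_div_iff (ne_of_gt (by nlinarith)) (by norm_num : (2:ℝ) ≠ 0)]
          ring
        rcases hdisjv (v + δ • u) with h' | h'
        · rw [map_add, map_smul, hfv, smul_eq_mul] at h'; nlinarith
        · rw [map_add, map_smul, smul_eq_mul] at h'; nlinarith
    have hker' : ∀ v : Pt, f v = 0 → g v = 0 := by
      intro v hfv
      have h1 := hker v hfv
      have h2 := hker (-v) (by rw [map_neg, hfv, neg_zero])
      rw [map_neg] at h2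
      linarith
    have hfu0 : f u ≠ 0 := ne_of_gt hfu
    set c' : ℝ := g u / f u with hc'
    have hrep : ∀ v : Pt, g v = f v * c' := by
      intro v
      have hkv : f (v - (f v / f u) • u) = 0 := by
        rw [map_sub, map_smul, smul_eq_mul]
        field_simp
        ring
      have h1 := hker' _ hkv
      rw [map_sub, map_smul, smul_eq_mul] at h1
      rw [hc']
      field_simp at h1 ⊢
      linarith
    have hc'0 : c' < 0 := by
      rcases lt_trichotomy c' 0 with h | h | h
      · exact h
      · exfalso
        have h5 := hrep (z1 - p)
        rw [h, mul_zero, map_sub] at h5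
        linarith
      · exfalso
        rcases hdisjv u with h' | h'
        · linarith
        · have := hrep u
          nlinarith
    have hC1f : ∀ x ∈ C1, f p ≤ f x := by
      intro x hx
      have h1 : g x ≤ g p := hg1 x hx
      have h2 : g (x - p) ≤ 0 := by rw [map_sub]; linarith
      have h3 : g (x - p) = f (x - p) * c' := hrep _
      have h4 : 0 ≤ f (x - p) := by nlinarith
      rw [map_sub] at h4; linarith
    have hfa : f a = f p := le_antisymm (hf0 a habC.1) (hC1f a habC.2)
    have hfb : f b = f p := le_antisymm (hf0 b hbbC.1) (hC1f b hbbC.2)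
    have hPL : ∀ q ∈ P, f q = f p → q = a ∨ q = b := by
      intro q hq hfq
      by_contra hcon
      push_neg at hcon
      obtain ⟨hqa, hqb⟩ := hcon
      exact hgp q hq a ha b hb hqa hab hqb
        (aux_collinear_line hfu0 (by rw [hfq, hfa]) (by rw [hfq, hfb]))
    -- the final contradiction, symmetric in the endpoints
    have hsubcl : ∀ b' : Pt, b' ≠ p → segment ℝ p b' ⊆ C0 ∩ C1 →
        (∀ q ∈ P, f q = f p → q = p ∨ q = b') → False := by
      intro b' hb'p hseg hline
      have hb'C : b' ∈ C0 ∩ C1 := hseg (right_mem_segment ℝ p b')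
      have hfb' : f b' = f p := le_antisymm (hf0 b' hb'C.1) (hC1f b' hb'C.2)
      have hbp : (0:ℝ) < ‖b' - p‖ := by
        rw [norm_pos_iff, sub_ne_zero]; exact hb'p
      set t : ℝ := ε / (2 * (‖b' - p‖ + 1)) with htdef
      have ht0 : 0 < t := by positivity
      have htb : t * ‖b' - p‖ < ε / 2 := by
        rw [htdef, div_mul_eq_mul_div, div_lt_iff₀ (by positivity)]
        nlinarith
      set x₀ : Pt := p - t • (b' - p) with hx₀def
      set w : Pt := z0 - p with hw
      have hfw : f w < 0 := by rw [hw, map_sub]; linarith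
      have hx₀C0 : x₀ ∈ C0 := by
        rw [← hC0cl.closure_eq, Metric.mem_closure_iff]
        intro δ hδ
        set s : ℝ := min (δ / (2 * (‖w‖ + 1))) (ε / (4 * (‖w‖ + 1))) with hs
        have hs0 : 0 < s := lt_min (by positivity) (by positivity)
        have hsw : s * ‖w‖ < δ := by
          calc s * ‖w‖ ≤ (δ / (2 * (‖w‖ + 1))) * ‖w‖ :=
                mul_le_mul_of_nonneg_right (min_le_left _ _) (norm_nonneg _)
            _ < δ := by
                rw [div_mul_eq_mul_div, div_lt_iff₀ (by positivity)]
                nlinarith [norm_nonneg w]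
        have hswε : s * ‖w‖ < ε / 2 := by
          calc s * ‖w‖ ≤ (ε / (4 * (‖w‖ + 1))) * ‖w‖ :=
                mul_le_mul_of_nonneg_right (min_le_right _ _) (norm_nonneg _)
            _ < ε / 2 := by
                rw [div_mul_eq_mul_div, div_lt_iff₀ (by positivity)]
                nlinarith [norm_nonneg w]
        refine ⟨x₀ + s • w, ?_, ?_⟩
        · have hmemK : x₀ + s • w ∈ K := by
            apply hball
            rw [Metric.mem_ball, dist_eq_norm]
            have heq : x₀ + s • w - p = (-t) • (b' - p) + s • w := by
              rw [hx₀def]; module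
            rw [heq]
            calc ‖(-t) • (b' - p) + s • w‖ ≤ ‖(-t) • (b' - p)‖ + ‖s • w‖ := norm_add_le _ _
              _ = t * ‖b' - p‖ + s * ‖w‖ := by
                  rw [norm_smul, norm_smul, Real.norm_eq_abs, Real.norm_eq_abs,
                    abs_neg, abs_of_pos ht0, abs_of_pos hs0]
              _ < ε / 2 + ε / 2 := by linarith
              _ = ε := by ring
          have hfval : f (x₀ + s • w) = f p + s * f w := by
            rw [hx₀def]
            rw [map_add, map_sub, map_smul, map_smul, map_sub]
            rw [smul_eq_mul, smul_eq_mul, hfb']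
            ring
          have hnotC1 : x₀ + s • w ∉ C1 := by
            intro hmem
            have := hC1f _ hmem
            rw [hfval] at this
            nlinarith
          rcases hmemK with h | h
          · exact h
          · exact absurd h hnotC1
        · rw [dist_eq_norm]
          have heq : x₀ - (x₀ + s • w) = (-s) • w := by module
          rw [heq, norm_smul, Real.norm_eq_abs, abs_neg, abs_of_pos hs0]
          exact hsw
      obtain ⟨V0, hV0P, hV03, hC0eq⟩ := h0poly C0 hC0
      have hx₀hull : x₀ ∈ convexHull ℝ (V0 : Set Pt) := by rw [← hC0eq]; exact hx₀C0
      have hV0le : ∀ v ∈ V0, f v ≤ f p := fun v hv =>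
        hf0 v (by rw [hC0eq]; exact subset_convexHull ℝ _ (Finset.mem_coe.2 hv))
      have hfx₀ : f x₀ = f p := by
        rw [hx₀def, map_sub, map_smul, map_sub, smul_eq_mul, hfb']
        ring
      obtain ⟨V', hV'sub, hV'f, hx₀V'⟩ := aux_face hx₀hull hV0le hfx₀
      have hV'ab : (V' : Set Pt) ⊆ {p, b'} := by
        intro v hv
        have hv' : v ∈ V' := hv
        rcases hline v (hV0P (hV'sub hv')) (hV'f v hv') with h | h
        · exact Or.inl h
        · exact Or.inr h
      have hx₀seg : x₀ ∈ segment ℝ p b' := by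
        rw [← convexHull_pair]
        exact convexHull_mono hV'ab hx₀V'
      obtain ⟨r1, r2, hr1, hr2, hr12, hreq⟩ := hx₀seg
      have hr1' : r1 = 1 - r2 := by linarith
      have hzero : (r2 + t) • (b' - p) = 0 := by
        have h' : r1 • p + r2 • b' = p - t • (b' - p) := by rw [hreq, hx₀def]
        rw [hr1'] at h'
        have : (r2 + t) • (b' - p) =
            ((1 - r2) • p + r2 • b') - (p - t • (b' - p)) := by module
        rw [this, h', sub_self]
      rcases smul_eq_zero.1 hzero with h | h
      · nlinarith
      · rw [sub_eq_zero] at h; exact hb'p h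
    rcases hPL p hp rfl with h | h
    · subst h
      exact hsubcl b (Ne.symm hab) hshared hPL
    · subst h
      refine hsubcl a hab ?_ ?_
      · rw [segment_symm]; exact hshared
      · intro q hq hfq
        rcases hPL q hq hfq with h | h
        · exact Or.inr h
        · exact Or.inl h
  -- K is a polygon
  have hKpoly : IsPolygonOn P K := by
    obtain ⟨V0, hV0P, hV03, hC0eq⟩ := h0poly C0 hC0
    obtain ⟨V1, hV1P, hV13, hC1eq⟩ := h1poly C1 hC1
    refine ⟨V0 ∪ V1, Finset.union_subset hV0P hV1P,
      le_trans hV03 (Finset.card_le_card Finset.subset_union_left), ?_⟩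
    rw [Finset.coe_union]
    calc K = convexHull ℝ (C0 ∪ C1) := hconv.symm
      _ = convexHull ℝ (convexHull ℝ (V0 : Set Pt) ∪ C1) := by rw [hC0eq]
      _ = convexHull ℝ ((V0 : Set Pt) ∪ C1) := convexHull_convexHull_union_left _ _
      _ = convexHull ℝ ((V0 : Set Pt) ∪ convexHull ℝ (V1 : Set Pt)) := by rw [hC1eq]
      _ = convexHull ℝ ((V0 : Set Pt) ∪ (V1 : Set Pt)) := convexHull_convexHull_union_right _ _
  -- membership helper
  have hmemrest : ∀ C, C ∈ ((D0 ∪ D1).erase C0).erase C1 ↔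
      C ∈ D0 ∪ D1 ∧ C ≠ C0 ∧ C ≠ C1 := by
    intro C
    rw [Finset.mem_erase, Finset.mem_erase]
    tauto
  have hQP : Q ⊆ convexHull ℝ (P : Set Pt) := convexHull_mono (by exact_mod_cast hsub)
  constructor
  · refine ⟨?_, ?_, ?_, ?_⟩
    · intro C hC
      rcases Finset.mem_insert.1 hC with rfl | hC
      · exact hKpoly
      · rcases Finset.mem_union.1 ((hmemrest C).1 hC).1 with h | h
        · exact h0poly C h
        · exact h1poly C h
    · intro C hC C' hC' hne
      rcases Finset.mem_insert.1 hC with rfl | hCr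
      · rcases Finset.mem_insert.1 hC' with rfl | hC'r
        · exact absurd rfl hne
        · obtain ⟨hm, hn0, hn1⟩ := (hmemrest C').1 hC'r
          rw [Set.inter_comm]
          exact hdisjC C' hm hn0 hn1
      · rcases Finset.mem_insert.1 hC' with rfl | hC'r
        · obtain ⟨hm, hn0, hn1⟩ := (hmemrest C).1 hCr
          exact hdisjC C hm hn0 hn1
        · obtain ⟨hm, -, -⟩ := (hmemrest C).1 hCr
          obtain ⟨hm', -, -⟩ := (hmemrest C').1 hC'r
          rcases Finset.mem_union.1 hm with h | h
          · rcases Finset.mem_union.1 hm' with h' | h'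
            · exact h0disj C h C' h' hne
            · exact hdisj01 C h C' h'
          · rcases Finset.mem_union.1 hm' with h' | h'
            · rw [Set.inter_comm]; exact hdisj01 C' h' C h
            · exact h1disj C h C' h' hne
    · have hbig : (⋃ C ∈ D0 ∪ D1, (C : Set Pt)) = convexHull ℝ (P : Set Pt) := by
        rw [Finset.set_biUnion_union, h0un, h1un]
        apply subset_antisymm
        · rintro x (⟨hx1, -⟩ | hx)
          · exact hx1
          · exact hQP hx
        · intro x hx
          by_cases hxQ : x ∈ interior Q
          · exact Or.inr (interior_subset hxQ)
          · exact Or.inl ⟨hx, hxQ⟩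
      rw [← hbig]
      apply subset_antisymm
      · refine Set.iUnion₂_subset ?_
        intro C hC
        rcases Finset.mem_insert.1 hC with rfl | hC
        · rintro x (h | h)
          · exact Set.mem_biUnion (Finset.mem_union_left _ hC0) h
          · exact Set.mem_biUnion (Finset.mem_union_right _ hC1) h
        · exact Set.subset_biUnion_of_mem (u := fun C => C) ((hmemrest C).1 hC).1
      · refine Set.iUnion₂_subset ?_
        intro C hC
        by_cases h0 : C = C0
        · subst h0
          intro x hx
          exact Set.mem_biUnion (Finset.mem_insert_self _ _) (Or.inl hx)
        · by_cases h1 : C = C1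
          · subst h1
            intro x hx
            exact Set.mem_biUnion (Finset.mem_insert_self _ _) (Or.inr hx)
          · exact Set.subset_biUnion_of_mem (u := fun C => C)
              (Finset.mem_insert_of_mem ((hmemrest C).2 ⟨hC, h0, h1⟩))
    · intro C hC p hp
      rcases Finset.mem_insert.1 hC with rfl | hC
      · exact hmain p hp
      · rcases Finset.mem_union.1 ((hmemrest C).1 hC).1 with h | h
        · exact h0int C h p hp
        · exact h1int C h p hp
  · -- cardinality
    have hD01 : Disjoint D0 D1 := by
      rw [Finset.disjoint_left]
      intro A hA0 hA1
      obtain ⟨-, -, hAne⟩ := props A (h0poly A hA0)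
      obtain ⟨z, hz⟩ := hAne
      have := hdisj01 A hA0 A hA1
      rw [Set.eq_empty_iff_forall_notMem] at this
      exact this z ⟨hz, hz⟩
    have hKnot : K ∉ ((D0 ∪ D1).erase C0).erase C1 := by
      intro hK
      obtain ⟨hm, hn0, hn1⟩ := (hmemrest K).1 hK
      rcases Finset.mem_union.1 hm with h | h
      · have hd := h0disj K h C0 hC0 hn0
        obtain ⟨z, hz⟩ := hC0ne
        rw [Set.eq_empty_iff_forall_notMem] at hd
        exact hd z ⟨interior_mono Set.subset_union_left hz, hz⟩
      · have hd := h1disj K h C1 hC1 hn1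
        obtain ⟨z, hz⟩ := hC1ne
        rw [Set.eq_empty_iff_forall_notMem] at hd
        exact hd z ⟨interior_mono Set.subset_union_right hz, hz⟩
    rw [Finset.card_insert_of_notMem hKnot]
    have hC1mem : C1 ∈ (D0 ∪ D1).erase C0 :=
      Finset.mem_erase.2 ⟨Ne.symm hC0C1, Finset.mem_union_right _ hC1⟩
    rw [Finset.card_erase_of_mem hC1mem]
    rw [Finset.card_erase_of_mem (Finset.mem_union_left _ hC0)]
    rw [Finset.card_union_of_disjoint hD01]
    have h0pos : 0 < D0.card := Finset.card_pos.2 ⟨C0, hC0⟩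
    have h1pos : 0 < D1.card := Finset.card_pos.2 ⟨C1, hC1⟩
    omega
end
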